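/- Let d ≥ 1 and let x ∈ ℝ^d be Diophantine. Then there exists a constant C > 0 (depending only on x and d) such that for all n ∈ ℕ, all ℓ ∈ {0,1,…,n} and all m ∈ {0,1,…,n}^d, log|β(ℓ,m)| ≥ n^{d+1} log n / (d+1)! − C·n^{d+1}. -/

import Mathlib

open Real MeasureTheory
open scoped ENNReal

/-- Distance from `t` to the nearest integer, `⟨t⟩`. -/
noncomputable def distNearestInt (t : ℝ) : ℝ := |t - round t|

/-- Maximum norm of an integer vector. -/
noncomputable def qnorm {d : ℕ} (q : Fin d → ℤ) : ℝ :=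
  ((Finset.univ.sup fun i => (q i).natAbs : ℕ) : ℝ)

/-- Closed unit polydisk in `ℂ^(d+1)`. -/
def polydisk (d : ℕ) : Set (Fin (d + 1) → ℂ) := {z | ∀ i, ‖z i‖ ≤ 1}

/-- The exponential curve `K(x) = {(e^z, e^{x₁ z}, …, e^{x_d z}) : |z| ≤ 1}` in `ℂ^(d+1)`. -/
def Kset {d : ℕ} (x : Fin d → ℝ) : Set (Fin (d + 1) → ℂ) :=
  {w | ∃ z : ℂ, ‖z‖ ≤ 1 ∧
    w = Fin.cons (Complex.exp z) fun i => Complex.exp ((x i : ℂ) * z)}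

/-- Sup norm `‖P‖_D` of a polynomial over a set `D ⊆ ℂ^(d+1)`. -/
noncomputable def polyNorm {d : ℕ} (P : MvPolynomial (Fin (d + 1)) ℂ)
    (D : Set (Fin (d + 1) → ℂ)) : ℝ :=
  sSup ((fun z => ‖MvPolynomial.eval z P‖) '' D)

/-- `E_n(x) = sup{‖P‖_{Δ^{d+1}} : P ∈ 𝒫_n(d+1), ‖P‖_{K(x)} ≤ 1}`. -/
noncomputable def Efun {d : ℕ} (x : Fin d → ℝ) (n : ℕ) : ℝ :=
  sSup {r : ℝ | ∃ P : MvPolynomial (Fin (d + 1)) ℂ, P.totalDegree ≤ n ∧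
    polyNorm P (Kset x) ≤ 1 ∧ r = polyNorm P (polydisk d)}

/-- `e_n(x) = log E_n(x)`. -/
noncomputable def efun {d : ℕ} (x : Fin d → ℝ) (n : ℕ) : ℝ := Real.log (Efun x n)

/-- `{1, x₁, …, x_d}` is linearly independent over `ℤ`. -/
def LinIndepOne {d : ℕ} (x : Fin d → ℝ) : Prop :=
  ∀ (p : ℤ) (q : Fin d → ℤ), (p : ℝ) + ∑ i, (q i : ℝ) * x i = 0 → p = 0 ∧ q = 0

/-- `x ∈ ℝ^d` is Diophantine: `⟨q·x⟩ > ε ‖q‖^{-μ}` for all nonzero integer vectors `q`. -/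
def IsDiophantine {d : ℕ} (x : Fin d → ℝ) : Prop :=
  ∃ μ : ℝ, (d : ℝ) ≤ μ ∧ ∃ ε : ℝ, 0 < ε ∧ ∀ q : Fin d → ℤ, q ≠ 0 →
    ε * qnorm q ^ (-μ) < distNearestInt (∑ i, (q i : ℝ) * x i)

/-- Membership in the exceptional set `W(d)`: `x ∈ [-1,1]^d` and the limsup over nonzero
nonnegative integer vectors `q` of `(-log⟨q·x⟩)/(‖q‖^{d+1} log‖q‖)` is `∞`. -/
def memW {d : ℕ} (x : Fin d → ℝ) : Prop :=
  (∀ i, x i ∈ Set.Icc (-1 : ℝ) 1) ∧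
  ∀ M N : ℝ, ∃ q : Fin d → ℤ, q ≠ 0 ∧ (∀ i, 0 ≤ q i) ∧ N ≤ qnorm q ∧
    M < (-Real.log (distNearestInt (∑ i, (q i : ℝ) * x i))) /
        (qnorm q ^ (d + 1) * Real.log (qnorm q))

/-- Liouville vectors: coordinates linearly independent over `ℚ`, and not Diophantine. -/
def IsLiouvilleVec {d : ℕ} (x : Fin d → ℝ) : Prop :=
  LinearIndependent ℚ x ∧ ¬ IsDiophantine x

/-- `β(ℓ,m) = ∏_{j₀+|j| ≤ n, (j₀,j) ≠ (ℓ,m)} ((ℓ - j₀) + (m - j)·x)`. -/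
noncomputable def betaProd {d : ℕ} (x : Fin d → ℝ) (n : ℕ) (ℓ : ℕ) (m : Fin d → ℕ) : ℝ :=
  ∏ p ∈ (Finset.range (n + 1) ×ˢ Fintype.piFinset fun _ : Fin d => Finset.range (n + 1)).filter
      (fun p => p.1 + ∑ i, p.2 i ≤ n ∧ p ≠ (ℓ, m)),
    (((ℓ : ℝ) - p.1) + ∑ i, ((m i : ℝ) - p.2 i) * x i)

lemma lemB : ∀ (L : ℕ) (c : ℤ), L.factorial ≤ 2^L * ∏ j₀ ∈ Finset.range (L+1), max 1 (c - (j₀:ℤ)).natAbs := by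
  intro L
  induction L with
  | zero => intro c; simpa using Nat.le_max_left 1 (c - 0).natAbs
  | succ L ih =>
    intro c
    have htri : L + 1 ≤ c.natAbs + (c - (L+1:ℕ)).natAbs := by
      have h1 : ((L:ℤ)+1).natAbs ≤ c.natAbs + (c - ((L:ℤ)+1)).natAbs := by
        have := Int.natAbs_sub_le c (c - ((L:ℤ)+1))
        simpa using this
      have h2 : ((L:ℤ)+1).natAbs = L + 1 := by
        omega
      push_cast
      omega
    rcases le_total (c - (L+1:ℕ)).natAbs c.natAbs with h | h
    · -- peel j₀ = 0
      have hpeel : ∏ j₀ ∈ Finset.range (L+2), max 1 (c - (j₀:ℤ)).natAbs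
          = (∏ j₀ ∈ Finset.range (L+1), max 1 ((c-1) - (j₀:ℤ)).natAbs) * max 1 c.natAbs := by
        rw [Finset.prod_range_succ' (fun j₀ => max 1 (c - (j₀:ℤ)).natAbs) (L+1)]
        congr 1
        · apply Finset.prod_congr rfl
          intro i _
          congr 2
          push_cast
          ring
        · simp
      rw [hpeel]
      have key : L + 1 ≤ 2 * max 1 c.natAbs := by
        have h2 := Nat.le_max_right 1 c.natAbs
        omega
      calc (L+1).factorial = (L+1) * L.factorial := Nat.factorial_succ L
        _ ≤ (2 * max 1 c.natAbs) * (2^L * ∏ j₀ ∈ Finset.range (L+1), max 1 ((c-1) - (j₀:ℤ)).natAbs) := by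
            exact Nat.mul_le_mul key (ih (c-1))
        _ = 2^(L+1) * ((∏ j₀ ∈ Finset.range (L+1), max 1 ((c-1) - (j₀:ℤ)).natAbs) * max 1 c.natAbs) := by
            ring
    · -- peel j₀ = L+1
      have hpeel : ∏ j₀ ∈ Finset.range (L+2), max 1 (c - (j₀:ℤ)).natAbs
          = (∏ j₀ ∈ Finset.range (L+1), max 1 (c - (j₀:ℤ)).natAbs) * max 1 (c - (L+1:ℕ)).natAbs := by
        rw [Finset.prod_range_succ]
      rw [hpeel]
      have key : L + 1 ≤ 2 * max 1 (c - (L+1:ℕ)).natAbs := by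
        have h2 := Nat.le_max_right 1 (c - (L+1:ℕ)).natAbs
        omega
      calc (L+1).factorial = (L+1) * L.factorial := Nat.factorial_succ L
        _ ≤ (2 * max 1 (c - (L+1:ℕ)).natAbs) * (2^L * ∏ j₀ ∈ Finset.range (L+1), max 1 (c - (j₀:ℤ)).natAbs) := by
            exact Nat.mul_le_mul key (ih c)
        _ = 2^(L+1) * ((∏ j₀ ∈ Finset.range (L+1), max 1 (c - (j₀:ℤ)).natAbs) * max 1 (c - (L+1:ℕ)).natAbs) := by
            ring

lemma lemF : ∀ L : ℕ, (L:ℝ) * Real.log L - L ≤ Real.log (L.factorial) := by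
  intro L
  induction L with
  | zero => simp
  | succ L ih =>
    have hfac : Real.log ((L+1).factorial) = Real.log (L+1) + Real.log (L.factorial) := by
      rw [Nat.factorial_succ]
      push_cast
      rw [Real.log_mul (by positivity) (by positivity)]
    have key : (L:ℝ) * Real.log (L+1) ≤ (L:ℝ) * Real.log L + 1 := by
      rcases Nat.eq_zero_or_pos L with h | h
      · simp [h]
      · have hL : (0:ℝ) < L := by exact_mod_cast h
        have h1 : Real.log ((L+1)/L) ≤ ((L:ℝ)+1)/L - 1 :=
          Real.log_le_sub_one_of_pos (by positivity)
        have h2 : Real.log (((L:ℝ)+1)/L) = Real.log (L+1) - Real.log L :=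
          Real.log_div (by positivity) (by positivity)
        have h3 : ((L:ℝ)+1)/L - 1 = 1/L := by field_simp; ring
        have h4 : Real.log ((L:ℝ)+1) - Real.log L ≤ 1/L := by rw [← h2, ← h3]; exact h1
        have := mul_le_mul_of_nonneg_left h4 hL.le
        have h5 : (L:ℝ) * (1/L) = 1 := by field_simp
        nlinarith
    push_cast [hfac]
    push_cast at ih
    nlinarith [Real.log_nonneg (by exact_mod_cast Nat.one_le_cast.mpr (Nat.succ_le_succ (Nat.zero_le L)) : (1:ℝ) ≤ (L:ℝ)+1)]

lemma lemE {n L : ℕ} (hn : 1 ≤ n) (hL : L ≤ n) :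
    (L:ℝ) * Real.log n - 2*n ≤ Real.log (L.factorial) := by
  rcases Nat.eq_zero_or_pos L with h | h
  · subst h
    simp only [Nat.cast_zero, zero_mul, Nat.factorial_zero, Nat.cast_one, Real.log_one]
    have : (0:ℝ) < n := by exact_mod_cast hn
    nlinarith
  · have hLpos : (0:ℝ) < L := by exact_mod_cast h
    have hnpos : (0:ℝ) < n := by exact_mod_cast hn
    have h1 : Real.log ((n:ℝ)/L) ≤ (n:ℝ)/L - 1 := Real.log_le_sub_one_of_pos (by positivity)
    have h2 : Real.log ((n:ℝ)/L) = Real.log n - Real.log L := Real.log_div (by positivity) (by positivity)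
    have h3 : (L:ℝ) * (Real.log n - Real.log L) ≤ (L:ℝ) * ((n:ℝ)/L - 1) := by
      apply mul_le_mul_of_nonneg_left _ hLpos.le
      rw [← h2]; exact h1
    have h4 : (L:ℝ) * ((n:ℝ)/L - 1) = (n:ℝ) - L := by field_simp
    have h5 := lemF L
    have hLn : (L:ℝ) ≤ n := by exact_mod_cast hL
    nlinarith

lemma lemD' : ∀ (p n : ℕ), (n:ℝ)^(p+1)/(p+1) ≤ ∑ t ∈ Finset.range (n+1), (t:ℝ)^p := by
  intro p n
  induction n with
  | zero => simp
  | succ n ih =>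
    rw [Finset.sum_range_succ]
    have hb : (1:ℝ) - ((p:ℝ)+1)/((n:ℝ)+1) ≤ ((n:ℝ)/((n:ℝ)+1))^(p+1) := by
      have hle : 1/((n:ℝ)+1) ≤ 1 := by
        rw [div_le_one (by positivity)]; linarith [Nat.cast_nonneg (α := ℝ) n]
      have h := one_add_mul_le_pow (a := -(1/((n:ℝ)+1))) (by linarith) (p+1)
      have h1 : (1:ℝ) + -(1/((n:ℝ)+1)) = (n:ℝ)/((n:ℝ)+1) := by field_simp; ring
      rw [h1] at h
      calc (1:ℝ) - ((p:ℝ)+1)/((n:ℝ)+1) = 1 + (((p:ℕ)+1 : ℕ) : ℝ) * (-(1/((n:ℝ)+1))) := by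
            push_cast; ring
        _ ≤ _ := h
    have hpos : (0:ℝ) < ((n:ℝ)+1)^(p+1) := by positivity
    have e1 : ((n:ℝ)+1)^(p+1) * ((n:ℝ)/((n:ℝ)+1))^(p+1) = (n:ℝ)^(p+1) := by
      rw [← mul_pow]; congr 1; field_simp
    have e2 : ((n:ℝ)+1)^(p+1) * ((1:ℝ) - ((p:ℝ)+1)/((n:ℝ)+1)) 
        = ((n:ℝ)+1)^(p+1) - ((p:ℝ)+1)*((n:ℝ)+1)^p := by
      rw [pow_succ]; field_simp
    have hmul := mul_le_mul_of_nonneg_left hb hpos.le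
    rw [e1, e2] at hmul
    -- hmul : (n+1)^(p+1) - (p+1)*(n+1)^p ≤ n^(p+1)
    have hppos : (0:ℝ) < (p:ℝ)+1 := by positivity
    rw [div_le_iff₀ hppos] at ih ⊢
    push_cast
    nlinarith [pow_nonneg (by positivity : (0:ℝ) ≤ (n:ℝ)+1) p]

lemma piSplit (d N : ℕ) (f : ℕ → ℝ) :
    ∑ j ∈ Fintype.piFinset (fun _ : Fin (d+1) => Finset.range (N+1)), f (∑ i, j i)
    = ∑ k ∈ Finset.range (N+1), ∑ j ∈ Fintype.piFinset (fun _ : Fin d => Finset.range (N+1)),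
        f (k + ∑ i, j i) := by
  rw [← Finset.sum_product']
  apply Finset.sum_nbij' (i := fun j => (j 0, Fin.tail j)) (j := fun p => Fin.cons p.1 p.2)
  · intro j hj
    simp only [Fintype.mem_piFinset] at hj
    simp only [Finset.mem_product]
    exact ⟨hj 0, by simp [Fintype.mem_piFinset, Fin.tail]; intro i; exact by simpa using hj i.succ⟩
  · intro p hp
    simp only [Finset.mem_product] at hp
    simp only [Fintype.mem_piFinset]
    intro i
    refine Fin.cases ?_ ?_ i
    · simpa using hp.1
    · intro i'
      simpa using (Fintype.mem_piFinset.mp hp.2) i'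
  · intro j _; exact Fin.cons_self_tail j
  · intro p _; simp
  · intro j _
    simp only []
    congr 1
    exact Fin.sum_univ_succ j

lemma lemD : ∀ (d : ℕ), ∀ (N n : ℕ), n ≤ N →
    (n:ℝ)^(d+1)/(d+1).factorial ≤
      ∑ j ∈ Fintype.piFinset (fun _ : Fin d => Finset.range (N+1)), ((n - ∑ i, j i : ℕ) : ℝ) := by
  intro d
  induction d with
  | zero =>
    intro N n _
    simp [Fin.sum_univ_zero]
  | succ d ih =>
    intro N n hnN
    rw [piSplit d N (fun s => ((n - s : ℕ) : ℝ))]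
    have step1 : ∀ k ∈ Finset.range (n+1),
        (((n-k : ℕ):ℝ))^(d+1)/(d+1).factorial ≤
          ∑ j ∈ Fintype.piFinset (fun _ : Fin d => Finset.range (N+1)), ((n - (k + ∑ i, j i) : ℕ) : ℝ) := by
      intro k hk
      have h1 : ∀ j : Fin d → ℕ, (n - (k + ∑ i, j i) : ℕ) = ((n-k) - ∑ i, j i : ℕ) := by
        intro j; omega
      simp only [h1]
      exact ih N (n-k) (by omega)
    have step2 : ∑ k ∈ Finset.range (n+1), (((n-k : ℕ):ℝ))^(d+1)/(d+1).factorial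
        ≤ ∑ k ∈ Finset.range (n+1), ∑ j ∈ Fintype.piFinset (fun _ : Fin d => Finset.range (N+1)),
            ((n - (k + ∑ i, j i) : ℕ) : ℝ) :=
      Finset.sum_le_sum step1
    have step3 : ∑ k ∈ Finset.range (n+1), ∑ j ∈ Fintype.piFinset (fun _ : Fin d => Finset.range (N+1)),
            ((n - (k + ∑ i, j i) : ℕ) : ℝ)
        ≤ ∑ k ∈ Finset.range (N+1), ∑ j ∈ Fintype.piFinset (fun _ : Fin d => Finset.range (N+1)),
            ((n - (k + ∑ i, j i) : ℕ) : ℝ) := by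
      apply Finset.sum_le_sum_of_subset_of_nonneg
      · exact Finset.range_subset_range.mpr (by omega)
      · intro k _ _
        exact Finset.sum_nonneg fun j _ => Nat.cast_nonneg _
    have step4 : (n:ℝ)^(d+1+1)/(d+1+1).factorial ≤ ∑ k ∈ Finset.range (n+1), (((n-k : ℕ):ℝ))^(d+1)/(d+1).factorial := by
      have hrefl : ∑ k ∈ Finset.range (n+1), (((n-k : ℕ):ℝ))^(d+1) = ∑ t ∈ Finset.range (n+1), (t:ℝ)^(d+1) := by
        have := Finset.sum_range_reflect (fun t => ((t:ℕ):ℝ)^(d+1)) (n+1)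
        simpa using this
      rw [← Finset.sum_div, hrefl]
      have h' := lemD' (d+1) n
      have hfacpos : (0:ℝ) < (d+1).factorial := by positivity
      have hfac : ((d+1+1).factorial : ℝ) = ((d:ℝ)+1+1) * ((d+1).factorial : ℝ) := by
        rw [Nat.factorial_succ]; push_cast; ring
      rw [div_le_div_iff₀ (by positivity) hfacpos, hfac]
      have h2 : (n:ℝ)^(d+1+1) ≤ (∑ t ∈ Finset.range (n+1), (t:ℝ)^(d+1)) * ((d:ℝ)+1+1) := by
        rw [div_le_iff₀ (by positivity)] at h'
        calc (n:ℝ)^(d+1+1) = (n:ℝ)^(d+1+1)/((d:ℝ)+1+1) * ((d:ℝ)+1+1) := by field_simp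
          _ ≤ _ := by
            apply mul_le_mul_of_nonneg_right _ (by positivity)
            rw [div_le_iff₀ (by positivity)]
            push_cast at h' ⊢
            linarith
      calc (n:ℝ)^(d+1+1) * ((d+1).factorial:ℝ) ≤ ((∑ t ∈ Finset.range (n+1), (t:ℝ)^(d+1)) * ((d:ℝ)+1+1)) * ((d+1).factorial:ℝ) := by
            apply mul_le_mul_of_nonneg_right h2 (by positivity)
        _ = (∑ t ∈ Finset.range (n+1), (t:ℝ)^(d+1)) * (((d:ℝ)+1+1) * ((d+1).factorial:ℝ)) := by ring
    calc (n:ℝ)^(d+1+1)/(d+1+1).factorial ≤ _ := step4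
      _ ≤ _ := le_trans step2 step3

lemma lemC (ℓ L : ℕ) (y δ : ℝ) (hδ : 0 < δ) (hδ1 : δ ≤ 1) (S : Finset ℕ)
    (hSsub : S ⊆ Finset.range (L+1))
    (hS : ∀ j₀ ∈ Finset.range (L+1), j₀ ∉ S → ((ℓ:ℤ) + round y - (j₀:ℤ) = 0))
    (hlow : ∀ j₀ ∈ S, ((ℓ:ℤ) + round y - (j₀:ℤ) = 0) → δ ≤ |(ℓ:ℝ) - (j₀:ℝ) + y|) :
    Real.log (L.factorial) - (2*(L:ℝ)+1) * Real.log 2 + Real.log δ ≤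
      ∑ j₀ ∈ S, Real.log |(ℓ:ℝ) - (j₀:ℝ) + y| := by
  set c : ℤ := (ℓ:ℤ) + round y with hc
  set θ : ℝ := y - round y with hθdef
  have hθ : |θ| ≤ 1/2 := abs_sub_round y
  have hf : ∀ j₀ : ℕ, (ℓ:ℝ) - (j₀:ℝ) + y = ((c - (j₀:ℤ) : ℤ) : ℝ) + θ := by
    intro j₀; rw [hc, hθdef]; push_cast; ring
  have hlog2 : (0:ℝ) ≤ Real.log 2 := Real.log_nonneg (by norm_num)
  have hlogδ : Real.log δ ≤ 0 := Real.log_nonpos hδ.le hδ1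
  classical
  rw [← Finset.sum_filter_add_sum_filter_not S (fun j₀ : ℕ => c - (j₀:ℤ) ≠ 0)]
  set T := S.filter (fun j₀ : ℕ => c - (j₀:ℤ) ≠ 0) with hT
  set B := S.filter (fun j₀ : ℕ => ¬ (c - (j₀:ℤ) ≠ 0)) with hB
  have partB : Real.log δ ≤ ∑ j₀ ∈ B, Real.log |(ℓ:ℝ) - (j₀:ℝ) + y| := by
    have hsub : B ⊆ ({c.toNat} : Finset ℕ) := by
      intro j₀ hj₀
      rw [hB, Finset.mem_filter] at hj₀
      have h0 : c = (j₀:ℤ) := by omega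
      have : j₀ = c.toNat := by omega
      simp [this]
    rcases Finset.subset_singleton_iff.mp hsub with h | h
    · rw [h]; simpa using hlogδ
    · rw [h, Finset.sum_singleton]
      have hmem : c.toNat ∈ B := by rw [h]; exact Finset.mem_singleton_self _
      rw [hB, Finset.mem_filter] at hmem
      have h0 : c - (c.toNat:ℤ) = 0 := by omega
      exact Real.log_le_log hδ (hlow _ hmem.1 h0)
  have partT : Real.log (L.factorial) - (2*(L:ℝ)+1) * Real.log 2
      ≤ ∑ j₀ ∈ T, Real.log |(ℓ:ℝ) - (j₀:ℝ) + y| := by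
    have hTeq : T = (Finset.range (L+1)).filter (fun j₀ : ℕ => c - (j₀:ℤ) ≠ 0) := by
      ext j₀
      simp only [hT, Finset.mem_filter]
      constructor
      · rintro ⟨h1, h2⟩; exact ⟨hSsub h1, h2⟩
      · rintro ⟨h1, h2⟩
        refine ⟨?_, h2⟩
        by_contra hns
        exact h2 (hS j₀ h1 hns)
    have hmemT : ∀ j₀ ∈ T, (1:ℝ) ≤ ((c - (j₀:ℤ)).natAbs : ℝ) := by
      intro j₀ hj₀
      rw [hT, Finset.mem_filter] at hj₀
      have : 1 ≤ (c - (j₀:ℤ)).natAbs := by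
        have := hj₀.2; omega
      exact_mod_cast this
    have hterm : ∀ j₀ ∈ T, Real.log (((c - (j₀:ℤ)).natAbs : ℝ)) - Real.log 2
        ≤ Real.log |(ℓ:ℝ) - (j₀:ℝ) + y| := by
      intro j₀ hj₀
      have h1 := hmemT j₀ hj₀
      have habs : ((c - (j₀:ℤ)).natAbs : ℝ) = |((c - (j₀:ℤ) : ℤ) : ℝ)| := by
        rw [Nat.cast_natAbs]
        norm_cast
      have hge : ((c - (j₀:ℤ)).natAbs : ℝ)/2 ≤ |(ℓ:ℝ) - (j₀:ℝ) + y| := by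
        rw [hf j₀]
        have h2 : |((c - (j₀:ℤ) : ℤ) : ℝ)| - |θ| ≤ |((c - (j₀:ℤ) : ℤ) : ℝ) + θ| := by
          have h3 := abs_add_le (((c - (j₀:ℤ) : ℤ) : ℝ) + θ) (-θ)
          simp only [add_neg_cancel_right] at h3
          simpa [abs_neg] using h3
        rw [← habs] at h2
        nlinarith
      calc Real.log (((c - (j₀:ℤ)).natAbs : ℝ)) - Real.log 2
          = Real.log (((c - (j₀:ℤ)).natAbs : ℝ)/2) := (Real.log_div (by linarith) (by norm_num)).symm
        _ ≤ Real.log |(ℓ:ℝ) - (j₀:ℝ) + y| := Real.log_le_log (by linarith) hge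
    have hsum1 : ∑ j₀ ∈ T, (Real.log (((c - (j₀:ℤ)).natAbs : ℝ)) - Real.log 2)
        ≤ ∑ j₀ ∈ T, Real.log |(ℓ:ℝ) - (j₀:ℝ) + y| := Finset.sum_le_sum hterm
    have hprodeq : ∏ j₀ ∈ Finset.range (L+1), max 1 (c - (j₀:ℤ)).natAbs
        = ∏ j₀ ∈ T, (c - (j₀:ℤ)).natAbs := by
      rw [hTeq, Finset.prod_filter]
      apply Finset.prod_congr rfl
      intro j₀ _
      by_cases h : c - (j₀:ℤ) ≠ 0
      · rw [if_pos h]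
        have : 1 ≤ (c - (j₀:ℤ)).natAbs := by omega
        omega
      · rw [if_neg h]
        have : (c - (j₀:ℤ)).natAbs = 0 := by omega
        omega
    have hPpos : (0:ℝ) < ∏ j₀ ∈ T, ((c - (j₀:ℤ)).natAbs : ℝ) :=
      Finset.prod_pos fun j₀ hj₀ => lt_of_lt_of_le one_pos (hmemT j₀ hj₀)
    have hcast : (L.factorial : ℝ) ≤ 2^L * ∏ j₀ ∈ T, ((c - (j₀:ℤ)).natAbs : ℝ) := by
      have h := lemB L c
      rw [hprodeq] at h
      exact_mod_cast h
    have hlogfac : Real.log (L.factorial) ≤ (L:ℝ) * Real.log 2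
        + Real.log (∏ j₀ ∈ T, ((c - (j₀:ℤ)).natAbs : ℝ)) := by
      calc Real.log (L.factorial) ≤ Real.log (2^L * ∏ j₀ ∈ T, ((c - (j₀:ℤ)).natAbs : ℝ)) :=
            Real.log_le_log (by exact_mod_cast Nat.factorial_pos L) hcast
        _ = Real.log ((2:ℝ)^L) + Real.log (∏ j₀ ∈ T, ((c - (j₀:ℤ)).natAbs : ℝ)) :=
            Real.log_mul (by positivity) (ne_of_gt hPpos)
        _ = (L:ℝ) * Real.log 2 + _ := by rw [Real.log_pow]
    have hlogprod : Real.log (∏ j₀ ∈ T, ((c - (j₀:ℤ)).natAbs : ℝ))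
        = ∑ j₀ ∈ T, Real.log (((c - (j₀:ℤ)).natAbs : ℝ)) :=
      Real.log_prod (fun j₀ hj₀ => by have := hmemT j₀ hj₀; linarith)
    have hcard : (T.card : ℝ) ≤ (L:ℝ) + 1 := by
      have : T.card ≤ L + 1 := by
        calc T.card ≤ (Finset.range (L+1)).card := by
              rw [hTeq]; exact Finset.card_filter_le _ _
          _ = L + 1 := Finset.card_range _
      exact_mod_cast this
    have hexpand : ∑ j₀ ∈ T, (Real.log (((c - (j₀:ℤ)).natAbs : ℝ)) - Real.log 2)
        = (∑ j₀ ∈ T, Real.log (((c - (j₀:ℤ)).natAbs : ℝ))) - (T.card : ℝ) * Real.log 2 := by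
      rw [Finset.sum_sub_distrib, Finset.sum_const, nsmul_eq_mul]
    have : Real.log (L.factorial) - (2*(L:ℝ)+1) * Real.log 2
        ≤ ∑ j₀ ∈ T, (Real.log (((c - (j₀:ℤ)).natAbs : ℝ)) - Real.log 2) := by
      rw [hexpand, ← hlogprod]
      have h4 : (T.card : ℝ) * Real.log 2 ≤ ((L:ℝ)+1) * Real.log 2 :=
        mul_le_mul_of_nonneg_right hcard hlog2
      nlinarith
    linarith
  calc Real.log (L.factorial) - (2*(L:ℝ)+1) * Real.log 2 + Real.log δ
      ≤ (∑ j₀ ∈ T, Real.log |(ℓ:ℝ) - (j₀:ℝ) + y|) + ∑ j₀ ∈ B, Real.log |(ℓ:ℝ) - (j₀:ℝ) + y| :=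
        add_le_add partT partB
    _ = _ := rfl

/-- **Proposition.** For Diophantine `x`,
`log |β(ℓ,m)| ≥ n^{d+1} log n / (d+1)! - C n^{d+1}`. -/
theorem log_betaProd_lower (d : ℕ) (hd : 1 ≤ d) (x : Fin d → ℝ) (hx : IsDiophantine x) :
    ∃ C : ℝ, 0 < C ∧ ∀ n : ℕ, ∀ ℓ ≤ n, ∀ m : Fin d → ℕ, (∀ i, m i ≤ n) →
      Real.log |betaProd x n ℓ m| ≥
        (n : ℝ) ^ (d + 1) * Real.log n / (d + 1).factorial - C * (n : ℝ) ^ (d + 1) := by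

  classical
  obtain ⟨μ, hμd, ε, hε, hdio⟩ := hx
  have hμ1 : (1:ℝ) ≤ μ := le_trans (by exact_mod_cast hd) hμd
  have hlog2 : (0:ℝ) < Real.log 2 := Real.log_pos (by norm_num)
  have habsε : (0:ℝ) ≤ |Real.log ε| := abs_nonneg _
  set C : ℝ := 2^d * (2 + 3*Real.log 2 + |Real.log ε| + μ) + 1 with hCdef
  have hbr0 : (0:ℝ) ≤ 2 + 3*Real.log 2 + |Real.log ε| + μ := by nlinarith
  have hCpos : 0 < C := by
    have h2d : (0:ℝ) ≤ 2^d := by positivity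
    nlinarith
  clear_value C
  refine ⟨C, hCpos, ?_⟩
  intro n ℓ hℓ m hm
  rcases Nat.eq_zero_or_pos n with hn0 | hn
  · -- n = 0
    subst hn0
    have hℓ0 : ℓ = 0 := Nat.le_zero.mp hℓ
    have hempty : (Finset.range (0 + 1) ×ˢ Fintype.piFinset fun _ : Fin d => Finset.range (0 + 1)).filter
        (fun p => p.1 + ∑ i, p.2 i ≤ 0 ∧ p ≠ (ℓ, m)) = ∅ := by
      rw [Finset.filter_eq_empty_iff]
      intro p hp
      rw [Finset.mem_product] at hp
      push_neg
      intro _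
      have hp1 : p.1 = 0 := by
        have := Finset.mem_range.mp hp.1; omega
      have hp2 : p.2 = m := by
        funext i
        have h1 := Fintype.mem_piFinset.mp hp.2 i
        have h2 := Finset.mem_range.mp h1
        have h3 := hm i
        omega
      rw [Prod.ext_iff]
      exact ⟨by rw [hp1, hℓ0], hp2⟩
    have hβ : betaProd x 0 ℓ m = 1 := by
      unfold betaProd
      rw [hempty, Finset.prod_empty]
    rw [hβ]
    simp
  · -- n ≥ 1
    have hnR : (1:ℝ) ≤ (n:ℝ) := by exact_mod_cast hn
    have hnpos : (0:ℝ) < n := by linarith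
    have hlogn0 : 0 ≤ Real.log n := Real.log_nonneg hnR
    have hlognn : Real.log n ≤ n := by
      have := Real.log_le_sub_one_of_pos hnpos; linarith
    set δ : ℝ := min 1 (ε * (n:ℝ) ^ (-μ)) with hδdef
    have hrpos : (0:ℝ) < (n:ℝ) ^ (-μ) := Real.rpow_pos_of_pos hnpos _
    have hδpos : 0 < δ := lt_min one_pos (mul_pos hε hrpos)
    have hδ1 : δ ≤ 1 := min_le_left _ _
    have hlogδ : -(|Real.log ε| + μ * Real.log n) ≤ Real.log δ := by
      rcases min_choice 1 (ε * (n:ℝ)^(-μ)) with h1 | h1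
      · rw [hδdef, h1, Real.log_one]
        nlinarith
      · rw [hδdef, h1, Real.log_mul (ne_of_gt hε) (ne_of_gt hrpos), Real.log_rpow hnpos]
        have := neg_abs_le (Real.log ε)
        linarith
    set Λ : Finset (Fin d → ℕ) := Fintype.piFinset (fun _ : Fin d => Finset.range (n+1)) with hΛ
    -- Diophantine bound for nonzero q = m - j
    have hdist : ∀ j : Fin d → ℕ, (∀ i, j i ≤ n) → j ≠ m →
        ε * (n:ℝ)^(-μ) < distNearestInt (∑ i, ((m i:ℝ) - (j i:ℝ)) * x i) := by
      intro j hji hjm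
      set q : Fin d → ℤ := fun i => (m i : ℤ) - (j i : ℤ) with hq
      have hqne : q ≠ 0 := by
        intro h
        apply hjm
        funext i
        have h2 := congrFun h i
        simp only [hq, Pi.zero_apply] at h2
        omega
      have hsum : (∑ i, ((q i : ℝ)) * x i) = ∑ i, ((m i:ℝ) - (j i:ℝ)) * x i := by
        apply Finset.sum_congr rfl
        intro i _
        simp only [hq]
        push_cast
        ring
      have hd2 := hdio q hqne
      rw [hsum] at hd2
      have hqn1 : (1:ℝ) ≤ qnorm q := by
        obtain ⟨i, hi⟩ := Function.ne_iff.mp hqne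
        have h3 : 1 ≤ (q i).natAbs := by
          have : q i ≠ 0 := hi
          omega
        have h4 : 1 ≤ Finset.univ.sup (fun i => (q i).natAbs) :=
          le_trans h3 (Finset.le_sup (f := fun i => (q i).natAbs) (Finset.mem_univ i))
        unfold qnorm
        exact_mod_cast h4
      have hqnn : qnorm q ≤ (n:ℝ) := by
        have h5 : Finset.univ.sup (fun i => (q i).natAbs) ≤ n := by
          apply Finset.sup_le
          intro i _
          have h6 := hm i
          have h7 := hji i
          simp only [hq]
          omega
        unfold qnorm
        exact_mod_cast h5
      have hr : (n:ℝ)^(-μ) ≤ qnorm q ^ (-μ) :=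
        Real.rpow_le_rpow_of_nonpos (by linarith) hqnn (by linarith)
      calc ε * (n:ℝ)^(-μ) ≤ ε * qnorm q ^ (-μ) := mul_le_mul_of_nonneg_left hr hε.le
        _ < _ := hd2
    have hymzero : (∑ i, ((m i:ℝ) - (m i:ℝ)) * x i) = 0 := by simp
    -- factors are nonzero
    have hfne : ∀ p ∈ (Finset.range (n + 1) ×ˢ Λ).filter
        (fun p : ℕ × (Fin d → ℕ) => p.1 + ∑ i, p.2 i ≤ n ∧ p ≠ (ℓ, m)),
        (((ℓ : ℝ) - p.1) + ∑ i, ((m i : ℝ) - p.2 i) * x i) ≠ 0 := by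
      intro p hp
      rw [Finset.mem_filter, Finset.mem_product] at hp
      obtain ⟨⟨hp1, hp2⟩, _, hpne⟩ := hp
      by_cases hjm : p.2 = m
      · rw [hjm, hymzero, add_zero]
        intro h0
        have h1 : (ℓ:ℝ) = p.1 := by linarith
        have h2 : ℓ = p.1 := by exact_mod_cast h1
        exact hpne (Prod.ext_iff.mpr ⟨h2.symm, hjm⟩)
      · intro h0
        have hji : ∀ i, p.2 i ≤ n := by
          intro i
          have := Finset.mem_range.mp (Fintype.mem_piFinset.mp hp2 i)
          omega
        have hdd := hdist p.2 hji hjm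
        have h3 : (∑ i, ((m i:ℝ) - (p.2 i:ℝ)) * x i) = (((p.1:ℤ) - (ℓ:ℤ) : ℤ):ℝ) := by
          push_cast
          linarith
        rw [h3] at hdd
        unfold distNearestInt at hdd
        rw [round_intCast] at hdd
        simp only [sub_self, abs_zero] at hdd
        nlinarith
    -- split the log of product into double sum
    have hlogsplit : Real.log |betaProd x n ℓ m| =
        ∑ j ∈ Λ, ∑ j₀ ∈ (Finset.range (n+1)).filter
          (fun j₀ : ℕ => j₀ + ∑ i, j i ≤ n ∧ (j₀, j) ≠ (ℓ, m)),
          Real.log |((ℓ:ℝ) - (j₀:ℝ)) + ∑ i, ((m i:ℝ) - (j i:ℝ)) * x i| := by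
      unfold betaProd
      rw [Finset.abs_prod]
      rw [Real.log_prod (fun p hp => abs_ne_zero.mpr (hfne p hp))]
      rw [Finset.sum_filter, Finset.sum_product_right]
      apply Finset.sum_congr rfl
      intro j _
      rw [Finset.sum_filter]
    -- per fiber lower bound
    have fiber : ∀ j ∈ Λ,
        Real.log ((n - ∑ i, j i).factorial) - (2*((n - ∑ i, j i : ℕ):ℝ)+1) * Real.log 2 + Real.log δ
        ≤ ∑ j₀ ∈ (Finset.range (n+1)).filter
            (fun j₀ : ℕ => j₀ + ∑ i, j i ≤ n ∧ (j₀, j) ≠ (ℓ, m)),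
            Real.log |((ℓ:ℝ) - (j₀:ℝ)) + ∑ i, ((m i:ℝ) - (j i:ℝ)) * x i| := by
      intro j hj
      have hji : ∀ i, j i ≤ n := by
        intro i
        have := Finset.mem_range.mp (Fintype.mem_piFinset.mp hj i)
        omega
      by_cases hjs : ∑ i, j i ≤ n
      · set L := n - ∑ i, j i with hL
        have hfilter : (Finset.range (n+1)).filter
            (fun j₀ : ℕ => j₀ + ∑ i, j i ≤ n ∧ (j₀, j) ≠ (ℓ, m))
            = (Finset.range (L+1)).filter (fun j₀ : ℕ => (j₀, j) ≠ (ℓ, m)) := by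
          ext j₀
          simp only [Finset.mem_filter, Finset.mem_range]
          constructor
          · rintro ⟨h1, h2, h3⟩; exact ⟨by omega, h3⟩
          · rintro ⟨h1, h2⟩; exact ⟨by omega, by omega, h2⟩
        rw [hfilter]
        by_cases hjm : j = m
        · subst hjm
          have hpred := lemC ℓ L 0 δ hδpos hδ1
            ((Finset.range (L+1)).filter (fun j₀ : ℕ => (j₀, j) ≠ (ℓ, j)))
            (Finset.filter_subset _ _)
            (by
              intro j₀ h1 h2
              simp only [Finset.mem_filter, not_and, ne_eq, not_not] at h2
              have h3 := h2 h1
              have h4 : j₀ = ℓ := (Prod.ext_iff.mp h3).1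
              rw [round_zero]
              omega)
            (by
              intro j₀ h1 h2
              rw [Finset.mem_filter] at h1
              rw [round_zero] at h2
              have h4 : j₀ = ℓ := by omega
              exact absurd (by rw [h4] : (j₀, j) = (ℓ, j)) h1.2)
          rw [hymzero]
          simpa using hpred
        · have hfull : (Finset.range (L+1)).filter (fun j₀ : ℕ => (j₀, j) ≠ (ℓ, m))
              = Finset.range (L+1) := by
            apply Finset.filter_true_of_mem
            intro j₀ _
            intro hcontra
            exact hjm (Prod.ext_iff.mp hcontra).2
          rw [hfull]
          have hy := hdist j hji hjm
          set y : ℝ := ∑ i, ((m i:ℝ) - (j i:ℝ)) * x i with hydef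
          apply lemC ℓ L y δ hδpos hδ1 (Finset.range (L+1)) subset_rfl
            (fun j₀ h1 h2 => absurd h1 h2)
          intro j₀ _ h2
          have h3 : (ℓ:ℝ) - (j₀:ℝ) + y = y - (round y : ℝ) := by
            have h4 : ((ℓ:ℤ) + round y : ℝ) = (j₀:ℝ) := by exact_mod_cast congrArg (fun z : ℤ => (z:ℝ)) (by omega : (ℓ:ℤ) + round y = (j₀:ℤ))
            push_cast at h4
            linarith
          rw [h3]
          have h5 : distNearestInt y = |y - (round y:ℝ)| := rfl
          have h6 : δ ≤ ε * (n:ℝ)^(-μ) := min_le_right _ _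
          rw [← h5]
          linarith
      · -- fiber empty
        have hempty : (Finset.range (n+1)).filter
            (fun j₀ : ℕ => j₀ + ∑ i, j i ≤ n ∧ (j₀, j) ≠ (ℓ, m)) = ∅ := by
          rw [Finset.filter_eq_empty_iff]
          intro j₀ _
          push_neg
          intro h
          omega
        rw [hempty, Finset.sum_empty]
        have h1 : n - ∑ i, j i = 0 := by omega
        rw [h1]
        simp only [Nat.factorial_zero, Nat.cast_one, Real.log_one, Nat.cast_zero]
        have hlogδ0 : Real.log δ ≤ 0 := Real.log_nonpos hδpos.le hδ1
        nlinarith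
    -- assemble
    rw [ge_iff_le, hlogsplit]
    have main1 : ∑ j ∈ Λ, (Real.log ((n - ∑ i, j i).factorial)
          - (2*((n - ∑ i, j i : ℕ):ℝ)+1) * Real.log 2 + Real.log δ)
        ≤ ∑ j ∈ Λ, ∑ j₀ ∈ (Finset.range (n+1)).filter
          (fun j₀ : ℕ => j₀ + ∑ i, j i ≤ n ∧ (j₀, j) ≠ (ℓ, m)),
          Real.log |((ℓ:ℝ) - (j₀:ℝ)) + ∑ i, ((m i:ℝ) - (j i:ℝ)) * x i| :=
      Finset.sum_le_sum fiber
    have hcard : (Λ.card : ℝ) = ((n:ℝ)+1)^d := by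
      have hc : Λ.card = (n+1)^d := by
        rw [hΛ, Fintype.card_piFinset]
        simp
      rw [hc]
      push_cast
      ring
    -- lower bound for sum of log factorials
    have hA : ((n:ℝ)^(d+1)/(d+1).factorial) * Real.log n - 2*(n:ℝ)*((n:ℝ)+1)^d
        ≤ ∑ j ∈ Λ, Real.log ((n - ∑ i, j i).factorial) := by
      have h1 : ∀ j ∈ Λ, ((n - ∑ i, j i : ℕ):ℝ) * Real.log n - 2*(n:ℝ)
          ≤ Real.log ((n - ∑ i, j i).factorial) := by
        intro j _
        exact lemE hn (by omega)
      have h2 := Finset.sum_le_sum h1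
      rw [Finset.sum_sub_distrib, Finset.sum_const, ← Finset.sum_mul] at h2
      have h3 := lemD d n n le_rfl
      have h4 : ((n:ℝ)^(d+1)/(d+1).factorial) * Real.log n
          ≤ (∑ j ∈ Λ, ((n - ∑ i, j i : ℕ):ℝ)) * Real.log n :=
        mul_le_mul_of_nonneg_right h3 hlogn0
      have h5 : (Λ.card : ℝ) * (2*(n:ℝ)) = 2*(n:ℝ)*((n:ℝ)+1)^d := by
        rw [hcard]; ring
      rw [nsmul_eq_mul, h5] at h2
      linarith
    have hB : ∑ j ∈ Λ, (2*((n - ∑ i, j i : ℕ):ℝ)+1) * Real.log 2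
        ≤ ((n:ℝ)+1)^d * (2*(n:ℝ)+1) * Real.log 2 := by
      have h1 : ∀ j ∈ Λ, (2*((n - ∑ i, j i : ℕ):ℝ)+1) * Real.log 2
          ≤ (2*(n:ℝ)+1) * Real.log 2 := by
        intro j _
        apply mul_le_mul_of_nonneg_right _ hlog2.le
        have : ((n - ∑ i, j i : ℕ):ℝ) ≤ (n:ℝ) := by
          exact_mod_cast Nat.sub_le n _
        linarith
      have h2 := Finset.sum_le_sum h1
      rw [Finset.sum_const, nsmul_eq_mul, hcard] at h2
      linarith [h2]
    have hC : ((n:ℝ)+1)^d * (-(|Real.log ε| + μ * Real.log n)) ≤ ∑ _j ∈ Λ, Real.log δ := by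
      rw [Finset.sum_const, nsmul_eq_mul, hcard]
      apply mul_le_mul_of_nonneg_left hlogδ (by positivity)
    have hsplit3 : ∑ j ∈ Λ, (Real.log ((n - ∑ i, j i).factorial)
          - (2*((n - ∑ i, j i : ℕ):ℝ)+1) * Real.log 2 + Real.log δ)
        = (∑ j ∈ Λ, Real.log ((n - ∑ i, j i).factorial))
          - (∑ j ∈ Λ, (2*((n - ∑ i, j i : ℕ):ℝ)+1) * Real.log 2)
          + ∑ _j ∈ Λ, Real.log δ := by
      rw [Finset.sum_add_distrib, Finset.sum_sub_distrib]
    -- final arithmetic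
    have hfinal : (n:ℝ)^(d+1) * Real.log n / (d+1).factorial - C * (n:ℝ)^(d+1)
        ≤ ((n:ℝ)^(d+1)/(d+1).factorial) * Real.log n - 2*(n:ℝ)*((n:ℝ)+1)^d
          - ((n:ℝ)+1)^d * (2*(n:ℝ)+1) * Real.log 2
          + ((n:ℝ)+1)^d * (-(|Real.log ε| + μ * Real.log n)) := by
      have heq : (n:ℝ)^(d+1) * Real.log n / (d+1).factorial
          = ((n:ℝ)^(d+1)/(d+1).factorial) * Real.log n := by ring
      rw [heq]
      have h1 : ((n:ℝ)+1)^d ≤ 2^d * (n:ℝ)^d := by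
        calc ((n:ℝ)+1)^d ≤ (2*(n:ℝ))^d := pow_le_pow_left₀ (by linarith) (by linarith) d
          _ = 2^d * (n:ℝ)^d := mul_pow 2 (n:ℝ) d
      have hbr : 2*(n:ℝ) + (2*(n:ℝ)+1)*Real.log 2 + (|Real.log ε| + μ * Real.log n)
          ≤ (2 + 3*Real.log 2 + |Real.log ε| + μ) * (n:ℝ) := by
        have e1 : (2*(n:ℝ)+1)*Real.log 2 ≤ (3*(n:ℝ))*Real.log 2 :=
          mul_le_mul_of_nonneg_right (by linarith) hlog2.le
        have e2 : |Real.log ε| ≤ |Real.log ε| * (n:ℝ) := le_mul_of_one_le_right habsε hnR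
        have e3 : μ * Real.log n ≤ μ * (n:ℝ) := mul_le_mul_of_nonneg_left hlognn (by linarith)
        have eexp : (2 + 3*Real.log 2 + |Real.log ε| + μ) * (n:ℝ)
            = 2*(n:ℝ) + (3*(n:ℝ))*Real.log 2 + |Real.log ε| * (n:ℝ) + μ * (n:ℝ) := by ring
        rw [eexp]
        linarith
      have hbrpos : (0:ℝ) ≤ 2*(n:ℝ) + (2*(n:ℝ)+1)*Real.log 2 + (|Real.log ε| + μ * Real.log n) := by
        have p1 : (0:ℝ) ≤ (2*(n:ℝ)+1)*Real.log 2 := mul_nonneg (by linarith) hlog2.le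
        have p2 : (0:ℝ) ≤ μ * Real.log n := mul_nonneg (by linarith) hlogn0
        linarith
      have h2 : ((n:ℝ)+1)^d * (2*(n:ℝ) + (2*(n:ℝ)+1)*Real.log 2 + (|Real.log ε| + μ * Real.log n))
          ≤ (2^d * (n:ℝ)^d) * ((2 + 3*Real.log 2 + |Real.log ε| + μ) * (n:ℝ)) :=
        mul_le_mul h1 hbr hbrpos (by positivity)
      have h3 : (2^d * (n:ℝ)^d) * ((2 + 3*Real.log 2 + |Real.log ε| + μ) * (n:ℝ))
          = (C - 1) * (n:ℝ)^(d+1) := by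
        rw [hCdef]
        ring
      have h4 : (0:ℝ) ≤ (n:ℝ)^(d+1) := by positivity
      have h5 : 2*(n:ℝ)*((n:ℝ)+1)^d + ((n:ℝ)+1)^d*(2*(n:ℝ)+1)*Real.log 2
            + ((n:ℝ)+1)^d*(|Real.log ε| + μ*Real.log n)
          = ((n:ℝ)+1)^d * (2*(n:ℝ) + (2*(n:ℝ)+1)*Real.log 2 + (|Real.log ε| + μ * Real.log n)) := by
        ring
      have h6 : 2*(n:ℝ)*((n:ℝ)+1)^d + ((n:ℝ)+1)^d*(2*(n:ℝ)+1)*Real.log 2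
            + ((n:ℝ)+1)^d*(|Real.log ε| + μ*Real.log n) ≤ (C - 1) * (n:ℝ)^(d+1) := by
        rw [h5]
        linarith only [h2, h3]
      linarith only [h6, h4, heq]
    calc (n:ℝ)^(d+1) * Real.log n / (d+1).factorial - C * (n:ℝ)^(d+1)
        ≤ _ := hfinal
      _ ≤ ∑ j ∈ Λ, (Real.log ((n - ∑ i, j i).factorial)
          - (2*((n - ∑ i, j i : ℕ):ℝ)+1) * Real.log 2 + Real.log δ) := by
          rw [hsplit3]
          have := hA
          have := hB
          have := hC
          linarith
      _ ≤ _ := main1
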